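/- Let k and Δ be positive integers and let Q ⊆ B ⊆ S be finite subsets of the color set [k] = {1,…,k} with |B| ≤ Δ, |S| < k − Δ, and Q ⊊ S. Sample independently: c₁ uniformly from [k] ∖ S, c₂ uniformly from S ∖ Q, and a Bernoulli event 'accept' with success probability p = 1 − (|S| − |Q|)/(k − |B|) (note 0 ≤ p ≤ 1 under the stated hypotheses). Output c₁ if 'accept' occurs or if c₂ ∈ B; otherwise output c₂. Then the output is uniformly distributed on [k] ∖ B. -/

import Mathlib

open Finset
open scoped ENNReal

/-- The Bernoulli PMF with an `ℝ≥0∞`-valued parameter, as `PMF.bernoulli` was defined in older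
Mathlib (it now takes an `ℝ≥0` parameter). -/
noncomputable def PMF.bernoulliENNReal (p : ℝ≥0∞) (h : p ≤ 1) : PMF Bool :=
  PMF.ofFintype (fun b => cond b p (1 - p)) (by simp [h])

/-- Distributional correctness of the Contract update: given `Q ⊆ B ⊆ S ⊆ [k]`
with `|B| ≤ Δ`, `|S| < k − Δ` and `Q ⊊ S`, sampling `c₁` uniformly outside `S`,
`c₂` uniformly from `S ∖ Q`, an independent acceptance event of probability
`1 − (|S| − |Q|)/(k − |B|)`, and outputting `c₁` upon acceptance or if `c₂ ∈ B`,
and `c₂` otherwise, yields a uniformly random color outside `B`. -/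
theorem contract_update_uniform (k Δ : ℕ) (hΔ : 1 ≤ Δ)
    (S B Q : Finset (Fin k))
    (hQB : Q ⊆ B) (hBS : B ⊆ S)
    (hB : B.card ≤ Δ) (hS : S.card < k - Δ) (hQS : Q ⊂ S)
    (h1 : (Finset.univ \ S).Nonempty) (h2 : (S \ Q).Nonempty)
    (h3 : (Finset.univ \ B).Nonempty)
    (p : ℝ≥0∞) (hp1 : p ≤ 1)
    (hp : p = ENNReal.ofReal
      (1 - ((S.card : ℝ) - (Q.card : ℝ)) / ((k : ℝ) - (B.card : ℝ)))) :
    ((PMF.uniformOfFinset (Finset.univ \ S) h1).bind fun c₁ =>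
        (PMF.uniformOfFinset (S \ Q) h2).bind fun c₂ =>
          (PMF.bernoulliENNReal p hp1).map fun accept =>
            if accept = true ∨ c₂ ∈ B then c₁ else c₂)
      = PMF.uniformOfFinset (Finset.univ \ B) h3 := by
  classical
  -- basic cardinality facts
  have hqs : Q.card < S.card := Finset.card_lt_card hQS
  have hqb : Q.card ≤ B.card := Finset.card_le_card hQB
  have hbs : B.card ≤ S.card := Finset.card_le_card hBS
  have hsk : S.card + B.card < k := by omega
  have hn1 : (Finset.univ \ S).card = k - S.card := by
    rw [Finset.card_sdiff_of_subset (Finset.subset_univ S), Finset.card_univ, Fintype.card_fin]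
  have hn2 : (S \ Q).card = S.card - Q.card := Finset.card_sdiff_of_subset hQS.subset
  have hn3 : (Finset.univ \ B).card = k - B.card := by
    rw [Finset.card_sdiff_of_subset (Finset.subset_univ B), Finset.card_univ, Fintype.card_fin]
  -- ENNReal basics
  have hm2ne : ((S.card - Q.card : ℕ) : ℝ≥0∞) ≠ 0 := by
    simp only [ne_eq, Nat.cast_eq_zero]; omega
  have hm3ne : ((k - B.card : ℕ) : ℝ≥0∞) ≠ 0 := by
    simp only [ne_eq, Nat.cast_eq_zero]; omega
  have hm1ne : ((k - S.card : ℕ) : ℝ≥0∞) ≠ 0 := by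
    simp only [ne_eq, Nat.cast_eq_zero]; omega
  have hm2t : ((S.card - Q.card : ℕ) : ℝ≥0∞) ≠ ⊤ := ENNReal.natCast_ne_top _
  have hm3t : ((k - B.card : ℕ) : ℝ≥0∞) ≠ ⊤ := ENNReal.natCast_ne_top _
  have hm1t : ((k - S.card : ℕ) : ℝ≥0∞) ≠ ⊤ := ENNReal.natCast_ne_top _
  -- the key probability computation
  have hpc : (1 : ℝ≥0∞) - p = ((S.card - Q.card : ℕ) : ℝ≥0∞) / ((k - B.card : ℕ) : ℝ≥0∞) := by
    have e1 : ((S.card : ℝ) - Q.card) = ((S.card - Q.card : ℕ) : ℝ) :=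
      (Nat.cast_sub hqs.le).symm
    have e2 : ((k : ℝ) - B.card) = ((k - B.card : ℕ) : ℝ) :=
      (Nat.cast_sub (by omega)).symm
    have hr0 : (0:ℝ) ≤ ((S.card - Q.card : ℕ) : ℝ) / ((k - B.card : ℕ) : ℝ) := by positivity
    have hr1 : ((S.card - Q.card : ℕ) : ℝ) / ((k - B.card : ℕ) : ℝ) ≤ 1 := by
      apply div_le_one_of_le₀
      · exact_mod_cast (by omega : S.card - Q.card ≤ k - B.card)
      · positivity
    rw [hp, e1, e2, ← ENNReal.ofReal_one, ← ENNReal.ofReal_sub _ (by linarith), sub_sub_cancel,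
      ENNReal.ofReal_div_of_pos (Nat.cast_pos.mpr (by omega : 0 < k - B.card)),
      ENNReal.ofReal_natCast, ENNReal.ofReal_natCast]
  have hpe : p = 1 - ((S.card - Q.card : ℕ) : ℝ≥0∞) / ((k - B.card : ℕ) : ℝ≥0∞) := by
    rw [← hpc, ENNReal.sub_sub_cancel ENNReal.one_ne_top hp1]
  ext x
  have hbool : ∀ (c₁ c₂ : Fin k),
      (∑ a : Bool, @ite _ (x = (if a = true ∨ c₂ ∈ B then c₁ else c₂)) (Classical.propDecidable _)
          (bif a then p else 1 - p) 0)
      = (if x = c₁ then p else 0)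
        + (if c₂ ∈ B then (if x = c₁ then 1 - p else 0) else (if x = c₂ then 1 - p else 0)) := by
    intro c₁ c₂
    rw [Fintype.sum_bool]
    by_cases h : c₂ ∈ B <;> simp [h, add_comm]
  simp only [PMF.bind_apply, PMF.map_apply, PMF.uniformOfFinset_apply, PMF.bernoulliENNReal, PMF.ofFintype_apply,
    tsum_fintype, hbool, ite_mul, zero_mul, ← Finset.sum_filter,
    Finset.filter_mem_eq_inter, Finset.univ_inter]
  rw [hn1, hn2, hn3]
  by_cases hxB : x ∈ B
  · -- x ∈ B : both sides are 0
    rw [if_neg (by simp [hxB])]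
    refine Finset.sum_eq_zero fun c₁ hc₁ => ?_
    rw [Finset.mem_sdiff] at hc₁
    have hxc₁ : x ≠ c₁ := fun h => hc₁.2 (h ▸ hBS hxB)
    have hz : ∀ c₂ ∈ S \ Q, ((S.card - Q.card : ℕ) : ℝ≥0∞)⁻¹ *
        ((if x = c₁ then p else 0) +
          if c₂ ∈ B then (if x = c₁ then 1 - p else 0) else (if x = c₂ then 1 - p else 0))
        = 0 := by
      intro c₂ hc₂
      by_cases hb : c₂ ∈ B
      · simp [hb, hxc₁]
      · have hxc₂ : x ≠ c₂ := fun h => hb (h ▸ hxB)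
        simp [hb, hxc₁, hxc₂]
    rw [Finset.sum_congr rfl hz, Finset.sum_const, smul_zero, mul_zero]
  by_cases hxS : x ∈ S
  · -- x ∈ S \ B
    rw [if_pos (by simp [hxB])]
    have hxQ : x ∉ Q := fun h => hxB (hQB h)
    have key : ∀ c₁ ∈ Finset.univ \ S,
        ((k - S.card : ℕ) : ℝ≥0∞)⁻¹ * ∑ c₂ ∈ S \ Q, ((S.card - Q.card : ℕ) : ℝ≥0∞)⁻¹ *
          ((if x = c₁ then p else 0) +
            if c₂ ∈ B then (if x = c₁ then 1 - p else 0) else (if x = c₂ then 1 - p else 0))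
        = ((k - S.card : ℕ) : ℝ≥0∞)⁻¹ * (((S.card - Q.card : ℕ) : ℝ≥0∞)⁻¹ * (1 - p)) := by
      intro c₁ hc₁
      rw [Finset.mem_sdiff] at hc₁
      have hxc₁ : x ≠ c₁ := fun h => hc₁.2 (h ▸ hxS)
      congr 1
      have hz : ∀ c₂ ∈ S \ Q, ((S.card - Q.card : ℕ) : ℝ≥0∞)⁻¹ *
          ((if x = c₁ then p else 0) +
            if c₂ ∈ B then (if x = c₁ then 1 - p else 0) else (if x = c₂ then 1 - p else 0))
          = if c₂ = x then ((S.card - Q.card : ℕ) : ℝ≥0∞)⁻¹ * (1 - p) else 0 := by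
        intro c₂ hc₂
        by_cases hb : c₂ ∈ B
        · have hcx : c₂ ≠ x := fun h => hxB (h ▸ hb)
          simp [hb, hxc₁, hcx]
        · by_cases hcx : c₂ = x
          · subst hcx
            simp [hb, hxc₁]
          · have hxc₂ : x ≠ c₂ := fun h => hcx h.symm
            simp [hb, hxc₁, hcx, hxc₂]
      rw [Finset.sum_congr rfl hz, Finset.sum_ite_eq' (S \ Q) x,
        if_pos (Finset.mem_sdiff.mpr ⟨hxS, hxQ⟩)]
    rw [Finset.sum_congr rfl key, Finset.sum_const, hn1, nsmul_eq_mul, hpc,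
      ← mul_assoc, ENNReal.mul_inv_cancel hm1ne hm1t, one_mul, div_eq_mul_inv,
      ← mul_assoc, ENNReal.inv_mul_cancel hm2ne hm2t, one_mul]
  · -- x ∉ S
    have hxB' : x ∉ B := fun h => hxS (hBS h)
    rw [if_pos (by simp [hxB'])]
    have key : ∀ c₁ ∈ Finset.univ \ S,
        ((k - S.card : ℕ) : ℝ≥0∞)⁻¹ * ∑ c₂ ∈ S \ Q, ((S.card - Q.card : ℕ) : ℝ≥0∞)⁻¹ *
          ((if x = c₁ then p else 0) +
            if c₂ ∈ B then (if x = c₁ then 1 - p else 0) else (if x = c₂ then 1 - p else 0))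
        = if c₁ = x then ((k - S.card : ℕ) : ℝ≥0∞)⁻¹ * ∑ c₂ ∈ S \ Q,
            (((S.card - Q.card : ℕ) : ℝ≥0∞)⁻¹ * p +
              if c₂ ∈ B then ((S.card - Q.card : ℕ) : ℝ≥0∞)⁻¹ * (1 - p) else 0) else 0 := by
      intro c₁ hc₁
      by_cases hc : c₁ = x
      · rw [if_pos hc]
        congr 1
        refine Finset.sum_congr rfl fun c₂ hc₂ => ?_
        rw [Finset.mem_sdiff] at hc₂
        have hxc₂ : x ≠ c₂ := fun h => hxS (h ▸ hc₂.1)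
        have hxc : x = c₁ := hc.symm
        have hcc : c₁ ≠ c₂ := by rw [hc]; exact hxc₂
        by_cases hb : c₂ ∈ B <;> simp [hb, hxc, hcc, mul_add]
      · rw [if_neg hc]
        have hxc₁ : x ≠ c₁ := fun h => hc h.symm
        have hz : ∀ c₂ ∈ S \ Q, ((S.card - Q.card : ℕ) : ℝ≥0∞)⁻¹ *
            ((if x = c₁ then p else 0) +
              if c₂ ∈ B then (if x = c₁ then 1 - p else 0) else (if x = c₂ then 1 - p else 0))
            = 0 := by
          intro c₂ hc₂
          rw [Finset.mem_sdiff] at hc₂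
          have hxc₂ : x ≠ c₂ := fun h => hxS (h ▸ hc₂.1)
          by_cases hb : c₂ ∈ B <;> simp [hb, hxc₁, hxc₂]
        rw [Finset.sum_congr rfl hz, Finset.sum_const, smul_zero, mul_zero]
    rw [Finset.sum_congr rfl key, Finset.sum_ite_eq' (Finset.univ \ S) x,
      if_pos (Finset.mem_sdiff.mpr ⟨Finset.mem_univ x, hxS⟩)]
    -- now compute the remaining sum
    have hsplit : (∑ c₂ ∈ S \ Q,
        (((S.card - Q.card : ℕ) : ℝ≥0∞)⁻¹ * p +
          if c₂ ∈ B then ((S.card - Q.card : ℕ) : ℝ≥0∞)⁻¹ * (1 - p) else 0))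
        = ((S.card - Q.card : ℕ) : ℝ≥0∞) * (((S.card - Q.card : ℕ) : ℝ≥0∞)⁻¹ * p)
          + ((B.card - Q.card : ℕ) : ℝ≥0∞) * (((S.card - Q.card : ℕ) : ℝ≥0∞)⁻¹ * (1 - p)) := by
      rw [Finset.sum_add_distrib, Finset.sum_const, hn2, nsmul_eq_mul, ← Finset.sum_filter]
      have hfe : (S \ Q).filter (· ∈ B) = B \ Q := by
        ext a
        simp only [Finset.mem_filter, Finset.mem_sdiff]
        exact ⟨fun ⟨⟨_, hq⟩, hb⟩ => ⟨hb, hq⟩, fun ⟨hb, hq⟩ => ⟨⟨hBS hb, hq⟩, hb⟩⟩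
      rw [hfe, Finset.sum_const, Finset.card_sdiff_of_subset hQB, nsmul_eq_mul]
    rw [hsplit, ← mul_assoc, ENNReal.mul_inv_cancel hm2ne hm2t, one_mul, hpc, hpe]
    have e1 : ((B.card - Q.card : ℕ) : ℝ≥0∞) * (((S.card - Q.card : ℕ) : ℝ≥0∞)⁻¹ *
        (((S.card - Q.card : ℕ) : ℝ≥0∞) / ((k - B.card : ℕ) : ℝ≥0∞)))
        = ((B.card - Q.card : ℕ) : ℝ≥0∞) / ((k - B.card : ℕ) : ℝ≥0∞) := by
      rw [div_eq_mul_inv, ← mul_assoc (((S.card - Q.card : ℕ) : ℝ≥0∞))⁻¹,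
        ENNReal.inv_mul_cancel hm2ne hm2t, one_mul, ← div_eq_mul_inv]
    have e2 : (1 : ℝ≥0∞) - ((S.card - Q.card : ℕ) : ℝ≥0∞) / ((k - B.card : ℕ) : ℝ≥0∞)
        = (((k - B.card) - (S.card - Q.card) : ℕ) : ℝ≥0∞) / ((k - B.card : ℕ) : ℝ≥0∞) := by
      rw [ENNReal.natCast_sub (k - B.card) (S.card - Q.card), ENNReal.sub_div (fun _ _ => hm3ne),
        ENNReal.div_self hm3ne hm3t]
    rw [e1, e2, ENNReal.div_add_div_same, ← Nat.cast_add,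
      (by omega : (k - B.card) - (S.card - Q.card) + (B.card - Q.card) = k - S.card),
      div_eq_mul_inv, ← mul_assoc, ENNReal.inv_mul_cancel hm1ne hm1t, one_mul]
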